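/- Let 0 ≤ γ < 1, 0 ≤ α < 1, 0 < τ ≤ e^{−1} and t > 0. Then ∫_0^t (t−s)^{−γ} min(s^{−1} τ, s^{−α}) ds ≤ (2^{γ+2} / ((1−γ)(1−α))) · t^{−γ} (|log t| + |log τ|) τ. -/

import Mathlib

open MeasureTheory intervalIntegral Set

set_option maxHeartbeats 1000000

/-- Lemma 3.10, first estimate (with precise constant `2^{γ+2}/((1-γ)(1-α))`):
for `0 ≤ γ < 1`, `0 ≤ α < 1`, `0 < τ ≤ e⁻¹`, `t > 0`,
`∫₀ᵗ (t-s)^{-γ} min(s⁻¹τ, s^{-α}) ds ≤ (2^{γ+2}/((1-γ)(1-α))) t^{-γ} (|log t| + |log τ|) τ`. -/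
theorem convolution_l_estimate
    (γ α τ t : ℝ) (hγ0 : 0 ≤ γ) (hγ1 : γ < 1) (hα0 : 0 ≤ α) (hα1 : α < 1)
    (hτ0 : 0 < τ) (hτ1 : τ ≤ Real.exp (-1)) (ht : 0 < t) :
    ∫ s in (0:ℝ)..t, (t - s) ^ (-γ) * min (s⁻¹ * τ) (s ^ (-α))
      ≤ (2 : ℝ) ^ (γ + 2) / ((1 - γ) * (1 - α)) * t ^ (-γ)
          * (|Real.log t| + |Real.log τ|) * τ := by
  have ht2 : 0 < t / 2 := by linarith
  have hA : 0 < 1 - α := by linarith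
  have hG : 0 < 1 - γ := by linarith
  set F : ℝ → ℝ := fun s => (t - s) ^ (-γ) * min (s⁻¹ * τ) (s ^ (-α)) with hF
  set σ : ℝ := τ ^ (1 - α)⁻¹ with hσ_def
  have hσpos : 0 < σ := Real.rpow_pos_of_pos hτ0 _
  set σ' : ℝ := min σ (t / 2) with hσ'_def
  have hσ'pos : 0 < σ' := lt_min hσpos ht2
  have hσ'le : σ' ≤ t / 2 := min_le_right _ _
  have hσA : σ ^ (1 - α) = τ := Real.rpow_inv_rpow hτ0.le hA.ne'
  set L : ℝ := |Real.log t| + |Real.log τ| with hL_def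
  have hlogτ : Real.log τ ≤ -1 := by
    calc Real.log τ ≤ Real.log (Real.exp (-1)) := Real.log_le_log hτ0 hτ1
      _ = -1 := Real.log_exp _
  have habsτ : |Real.log τ| = -Real.log τ := abs_of_nonpos (by linarith)
  have hL1 : 1 ≤ L := by
    have : 1 ≤ |Real.log τ| := by rw [habsτ]; linarith
    have : 0 ≤ |Real.log t| := abs_nonneg _
    simp only [hL_def]; linarith
  -- basic rpow facts
  have h2g : (t / 2) ^ (-γ) = 2 ^ γ * t ^ (-γ) := by
    rw [Real.div_rpow ht.le (by norm_num : (0:ℝ) ≤ 2),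
      Real.rpow_neg (by norm_num : (0:ℝ) ≤ 2), div_eq_mul_inv, inv_inv]
    ring
  -- nonnegativity of min
  have hminnn : ∀ s : ℝ, 0 ≤ s → 0 ≤ min (s⁻¹ * τ) (s ^ (-α)) := fun s hs =>
    le_min (by positivity) (Real.rpow_nonneg hs _)
  -- a.e. strong measurability via continuity on the open interval
  have hFcont : ContinuousOn F (Ioo (0:ℝ) t) := by
    apply ContinuousOn.mul
    · refine (continuousOn_const.sub continuousOn_id).rpow_const (fun s hs => Or.inl ?_)
      show t - s ≠ 0
      intro h
      rw [sub_eq_zero] at h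
      exact absurd h.symm (ne_of_lt hs.2)
    · have hc1 : ContinuousOn (fun s : ℝ => s⁻¹ * τ) (Ioo (0:ℝ) t) :=
        (continuousOn_id.inv₀ (fun s hs => ne_of_gt hs.1)).mul continuousOn_const
      have hc2 : ContinuousOn (fun s : ℝ => s ^ (-α)) (Ioo (0:ℝ) t) :=
        continuousOn_id.rpow_const (fun s hs => Or.inl (ne_of_gt hs.1))
      exact fun x hx => Filter.Tendsto.min (hc1 x hx) (hc2 x hx)
  -- integrability on [0, t]
  have hrpow_int : ∀ (a b : ℝ), IntervalIntegrable (fun s : ℝ => s ^ (-α)) volume a b :=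
    fun a b => intervalIntegrable_rpow' (by linarith)
  have hrpowγ_int : ∀ (a b : ℝ), IntervalIntegrable (fun s : ℝ => s ^ (-γ)) volume a b :=
    fun a b => intervalIntegrable_rpow' (by linarith)
  have hsub_int : IntervalIntegrable (fun s : ℝ => (t - s) ^ (-γ)) volume 0 t := by
    have := ((hrpowγ_int 0 t).comp_sub_left t).symm
    simpa using this
  have hg_int : IntervalIntegrable
      (fun s : ℝ => (t / 2) ^ (-γ) * s ^ (-α) + (t / 2) ^ (-α) * (t - s) ^ (-γ))
      volume 0 t :=
    ((hrpow_int 0 t).const_mul _).add (hsub_int.const_mul _)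
  have hint : IntervalIntegrable F volume 0 t := by
    rw [intervalIntegrable_iff_integrableOn_Ioo_of_le ht.le] at hg_int ⊢
    refine hg_int.mono' (hFcont.aestronglyMeasurable measurableSet_Ioo) ?_
    filter_upwards [ae_restrict_mem measurableSet_Ioo] with s hs
    have hs0 : 0 < s := hs.1
    have hst : s ≤ t := hs.2.le
    have hts : 0 ≤ t - s := by linarith
    have hFnn : 0 ≤ F s := mul_nonneg (Real.rpow_nonneg hts _) (hminnn s hs0.le)
    have hgnn : 0 ≤ (t / 2) ^ (-γ) * s ^ (-α) + (t / 2) ^ (-α) * (t - s) ^ (-γ) := by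
      have h1 := Real.rpow_nonneg hts (-γ)
      have h2 := Real.rpow_nonneg hs0.le (-α)
      have h3 := Real.rpow_nonneg ht2.le (-γ)
      have h4 := Real.rpow_nonneg ht2.le (-α)
      positivity
    rw [Real.norm_eq_abs, abs_of_nonneg hFnn]
    rcases le_or_gt s (t / 2) with hcase | hcase
    · have h1 : (t - s) ^ (-γ) ≤ (t / 2) ^ (-γ) :=
        Real.rpow_le_rpow_of_nonpos ht2 (by linarith) (by linarith)
      have h2 : F s ≤ (t / 2) ^ (-γ) * s ^ (-α) :=
        mul_le_mul h1 (min_le_right _ _) (hminnn s hs0.le) (Real.rpow_nonneg ht2.le _)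
      have h3 : 0 ≤ (t / 2) ^ (-α) * (t - s) ^ (-γ) :=
        mul_nonneg (Real.rpow_nonneg ht2.le _) (Real.rpow_nonneg hts _)
      linarith
    · have h1 : s ^ (-α) ≤ (t / 2) ^ (-α) :=
        Real.rpow_le_rpow_of_nonpos ht2 hcase.le (by linarith)
      have h2 : F s ≤ (t - s) ^ (-γ) * (t / 2) ^ (-α) :=
        mul_le_mul_of_nonneg_left ((min_le_right _ _).trans h1) (Real.rpow_nonneg hts _)
      have h3 : 0 ≤ (t / 2) ^ (-γ) * s ^ (-α) :=
        mul_nonneg (Real.rpow_nonneg ht2.le _) (Real.rpow_nonneg hs0.le _)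
      nlinarith [h2, h3]
  -- split the integral
  have hi1 : IntervalIntegrable F volume 0 σ' :=
    hint.mono_set (by
      rw [uIcc_of_le hσ'pos.le, uIcc_of_le ht.le]
      exact Icc_subset_Icc le_rfl (by linarith))
  have hi2 : IntervalIntegrable F volume σ' (t / 2) :=
    hint.mono_set (by
      rw [uIcc_of_le hσ'le, uIcc_of_le ht.le]
      exact Icc_subset_Icc hσ'pos.le (by linarith))
  have hi3 : IntervalIntegrable F volume (t / 2) t :=
    hint.mono_set (by
      rw [uIcc_of_le (by linarith : t / 2 ≤ t), uIcc_of_le ht.le]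
      exact Icc_subset_Icc ht2.le le_rfl)
  have hsplit : (∫ s in (0:ℝ)..t, F s)
      = (∫ s in (0:ℝ)..σ', F s) + (∫ s in σ'..(t/2), F s) + ∫ s in (t/2)..t, F s := by
    rw [integral_add_adjacent_intervals hi1 hi2,
      integral_add_adjacent_intervals (hi1.trans hi2) hi3]
  -- Bound 1 : ∫_0^σ' F ≤ (2^γ t^{-γ} τ) * (1/(1-α))
  have hB1 : (∫ s in (0:ℝ)..σ', F s) ≤ 2 ^ γ * t ^ (-γ) * τ * (1 / (1 - α)) := by
    have hmono : (∫ s in (0:ℝ)..σ', F s)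
        ≤ ∫ s in (0:ℝ)..σ', (2 ^ γ * t ^ (-γ)) * s ^ (-α) := by
      apply integral_mono_on hσ'pos.le hi1 ((hrpow_int 0 σ').const_mul _)
      intro s hs
      have h1 : (t - s) ^ (-γ) ≤ (t / 2) ^ (-γ) :=
        Real.rpow_le_rpow_of_nonpos ht2 (by nlinarith [hs.2, hσ'le]) (by linarith)
      calc F s ≤ (t / 2) ^ (-γ) * s ^ (-α) :=
            mul_le_mul h1 (min_le_right _ _) (hminnn s hs.1) (Real.rpow_nonneg ht2.le _)
        _ = (2 ^ γ * t ^ (-γ)) * s ^ (-α) := by rw [h2g]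
    have heval : (∫ s in (0:ℝ)..σ', (2 ^ γ * t ^ (-γ)) * s ^ (-α))
        = (2 ^ γ * t ^ (-γ)) * (σ' ^ (-α + 1) / (-α + 1)) := by
      rw [intervalIntegral.integral_const_mul, integral_rpow (Or.inl (by linarith)),
        Real.zero_rpow (by linarith : (0:ℝ) < -α + 1).ne', sub_zero]
    have hle : σ' ^ (-α + 1) ≤ τ := by
      calc σ' ^ (-α + 1) ≤ σ ^ (-α + 1) :=
            Real.rpow_le_rpow hσ'pos.le (min_le_left _ _) (by linarith)
        _ = σ ^ (1 - α) := by ring_nf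
        _ = τ := hσA
    have hdiv : σ' ^ (-α + 1) / (-α + 1) ≤ τ * (1 / (1 - α)) := by
      rw [mul_one_div, show -α + 1 = 1 - α by ring]
      have hle' : σ' ^ ((1:ℝ) - α) ≤ τ := by
        rw [show (1:ℝ) - α = -α + 1 by ring]; exact hle
      exact (div_le_div_iff_of_pos_right hA).mpr hle'
    calc (∫ s in (0:ℝ)..σ', F s) ≤ (2 ^ γ * t ^ (-γ)) * (σ' ^ (-α + 1) / (-α + 1)) := by
          rw [← heval]; exact hmono
      _ ≤ 2 ^ γ * t ^ (-γ) * τ * (1 / (1 - α)) := by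
          rw [mul_assoc (2 ^ γ * t ^ (-γ))]
          exact mul_le_mul_of_nonneg_left hdiv (by positivity)
  -- Bound 2 : ∫_σ'^{t/2} F ≤ (2^γ t^{-γ} τ) * (log(t/2) - log σ')
  have hB2 : (∫ s in σ'..(t/2), F s)
      ≤ 2 ^ γ * t ^ (-γ) * τ * (Real.log (t / 2) - Real.log σ') := by
    have hcont : ContinuousOn (fun s : ℝ => (2 ^ γ * t ^ (-γ) * τ) * s⁻¹) (uIcc σ' (t/2)) := by
      apply ContinuousOn.mul continuousOn_const
      apply ContinuousOn.inv₀ continuousOn_id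
      intro x hx
      rw [uIcc_of_le hσ'le] at hx
      exact ne_of_gt (lt_of_lt_of_le hσ'pos hx.1)
    have hmono : (∫ s in σ'..(t/2), F s)
        ≤ ∫ s in σ'..(t/2), (2 ^ γ * t ^ (-γ) * τ) * s⁻¹ := by
      apply integral_mono_on hσ'le hi2 (hcont.intervalIntegrable)
      intro s hs
      have hs0 : 0 < s := lt_of_lt_of_le hσ'pos hs.1
      have h1 : (t - s) ^ (-γ) ≤ (t / 2) ^ (-γ) :=
        Real.rpow_le_rpow_of_nonpos ht2 (by linarith [hs.2]) (by linarith)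
      calc F s ≤ (t / 2) ^ (-γ) * (s⁻¹ * τ) :=
            mul_le_mul h1 (min_le_left _ _) (hminnn s hs0.le) (Real.rpow_nonneg ht2.le _)
        _ = (2 ^ γ * t ^ (-γ) * τ) * s⁻¹ := by rw [h2g]; ring
    have heval : (∫ s in σ'..(t/2), (2 ^ γ * t ^ (-γ) * τ) * s⁻¹)
        = (2 ^ γ * t ^ (-γ) * τ) * (Real.log (t / 2) - Real.log σ') := by
      rw [intervalIntegral.integral_const_mul, integral_inv, Real.log_div ht2.ne' hσ'pos.ne']
      rw [uIcc_of_le hσ'le]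
      intro h
      exact absurd h.1 (by simp [not_le]; exact hσ'pos)
    rw [← heval]; exact hmono
  -- Bound 3 : ∫_{t/2}^t F ≤ (2^γ t^{-γ} τ) * (1/(1-γ))
  have hB3 : (∫ s in (t/2)..t, F s) ≤ 2 ^ γ * t ^ (-γ) * τ * (1 / (1 - γ)) := by
    have hsubint : IntervalIntegrable (fun s : ℝ => ((t/2)⁻¹ * τ) * (t - s) ^ (-γ))
        volume (t/2) t := by
      have h0 := (((hrpowγ_int 0 (t/2)).comp_sub_left t).symm).const_mul ((t/2)⁻¹ * τ)
      have : t - t / 2 = t / 2 := by ring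
      rw [this, sub_zero] at h0
      exact h0
    have hmono : (∫ s in (t/2)..t, F s)
        ≤ ∫ s in (t/2)..t, ((t/2)⁻¹ * τ) * (t - s) ^ (-γ) := by
      apply integral_mono_on (by linarith) hi3 hsubint
      intro s hs
      have hs0 : 0 < s := lt_of_lt_of_le ht2 hs.1
      have hts : 0 ≤ t - s := by linarith [hs.2]
      have h1 : s⁻¹ * τ ≤ (t/2)⁻¹ * τ := by
        apply mul_le_mul_of_nonneg_right _ hτ0.le
        exact inv_anti₀ ht2 hs.1
      calc F s ≤ (t - s) ^ (-γ) * ((t/2)⁻¹ * τ) :=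
            mul_le_mul_of_nonneg_left ((min_le_left _ _).trans h1) (Real.rpow_nonneg hts _)
        _ = ((t/2)⁻¹ * τ) * (t - s) ^ (-γ) := by ring
    have heval : (∫ s in (t/2)..t, ((t/2)⁻¹ * τ) * (t - s) ^ (-γ))
        = ((t/2)⁻¹ * τ) * ((t/2) ^ (-γ + 1) / (-γ + 1)) := by
      rw [intervalIntegral.integral_const_mul]
      have hcomp : (∫ s in (t/2)..t, (t - s) ^ (-γ))
          = ∫ u in (t - t)..(t - t/2), u ^ (-γ) :=
        intervalIntegral.integral_comp_sub_left (fun u : ℝ => u ^ (-γ)) t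
      rw [hcomp, sub_self, show t - t / 2 = t / 2 by ring,
        integral_rpow (Or.inl (by linarith)),
        Real.zero_rpow (by linarith : (0:ℝ) < -γ + 1).ne', sub_zero]
    have hval : ((t/2)⁻¹ * τ) * ((t/2) ^ (-γ + 1) / (-γ + 1))
        = 2 ^ γ * t ^ (-γ) * τ * (1 / (1 - γ)) := by
      have hinv : (t/2)⁻¹ = (t/2) ^ (-1 : ℝ) := (Real.rpow_neg_one _).symm
      have hmul : (t/2) ^ (-1 : ℝ) * (t/2) ^ (-γ + 1) = (t/2) ^ (-γ) := by
        rw [← Real.rpow_add ht2]; norm_num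
      calc ((t/2)⁻¹ * τ) * ((t/2) ^ (-γ + 1) / (-γ + 1))
          = ((t/2) ^ (-1 : ℝ) * (t/2) ^ (-γ + 1)) * τ * (1 / (-γ + 1)) := by
            rw [hinv]; ring
        _ = (t/2) ^ (-γ) * τ * (1 / (1 - γ)) := by
            rw [hmul, show -γ + 1 = 1 - γ by ring]
        _ = 2 ^ γ * t ^ (-γ) * τ * (1 / (1 - γ)) := by rw [h2g]
    rw [← hval, ← heval]; exact hmono
  -- bound on the log difference
  have hlogdiff : Real.log (t / 2) - Real.log σ' ≤ 2 * L / (1 - α) := by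
    rcases le_or_gt σ (t / 2) with hcase | hcase
    · have hσ'eq : σ' = σ := min_eq_left hcase
      have hlogσ : Real.log σ = (1 - α)⁻¹ * Real.log τ := Real.log_rpow hτ0 _
      have hlt2 : Real.log (t / 2) ≤ |Real.log t| := by
        calc Real.log (t / 2) ≤ Real.log t :=
              Real.log_le_log ht2 (by linarith)
          _ ≤ |Real.log t| := le_abs_self _
      have hX : 0 ≤ |Real.log t| := abs_nonneg _
      have hY : 1 ≤ |Real.log τ| := by rw [habsτ]; linarith
      rw [hσ'eq, hlogσ, le_div_iff₀ hA]
      have hexp : (Real.log (t / 2) - (1 - α)⁻¹ * Real.log τ) * (1 - α)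
          = Real.log (t / 2) * (1 - α) - Real.log τ := by
        field_simp
      rw [hexp]
      have h1 : Real.log (t / 2) * (1 - α) ≤ |Real.log t| := by
        rcases le_or_gt (Real.log (t / 2)) 0 with hu | hu
        · have := mul_nonpos_iff.mpr (Or.inr ⟨hu, hA.le⟩)
          linarith
        · have := mul_le_mul_of_nonneg_left (show 1 - α ≤ 1 by linarith) hu.le
          rw [mul_one] at this
          linarith
      linarith [hL_def, habsτ, h1, hX, hY]
    · have hσ'eq : σ' = t / 2 := min_eq_right hcase.le
      rw [hσ'eq, sub_self]
      positivity
  -- final arithmetic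
  have hP : 0 < 2 ^ γ * t ^ (-γ) * τ := by
    have h1 := Real.rpow_pos_of_pos ht (-γ)
    have h2 := Real.rpow_pos_of_pos (by norm_num : (0:ℝ) < 2) γ
    positivity
  have hB2' : (∫ s in σ'..(t/2), F s) ≤ 2 ^ γ * t ^ (-γ) * τ * (2 * L / (1 - α)) :=
    hB2.trans (mul_le_mul_of_nonneg_left hlogdiff hP.le)
  have hkey : 1 / (1 - α) + 2 * L / (1 - α) + 1 / (1 - γ) ≤ 4 * L / ((1 - γ) * (1 - α)) := by
    rw [le_div_iff₀ (by positivity : (0:ℝ) < (1 - γ) * (1 - α))]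
    have e : (1 / (1 - α) + 2 * L / (1 - α) + 1 / (1 - γ)) * ((1 - γ) * (1 - α))
        = (1 - γ) + 2 * L * (1 - γ) + (1 - α) := by
      field_simp
    rw [e]
    nlinarith [hL1, hA, hG, mul_le_mul_of_nonneg_left (by linarith : 1 - γ ≤ 1) (by linarith : (0:ℝ) ≤ 2 * L)]
  have hRHS : (2 : ℝ) ^ (γ + 2) / ((1 - γ) * (1 - α)) * t ^ (-γ) * L * τ
      = (2 ^ γ * t ^ (-γ) * τ) * (4 * L / ((1 - γ) * (1 - α))) := by
    have h4 : (2 : ℝ) ^ (γ + 2) = 2 ^ γ * 4 := by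
      rw [Real.rpow_add (by norm_num : (0:ℝ) < 2)]
      norm_num
    rw [h4]; ring
  calc (∫ s in (0:ℝ)..t, F s)
      = (∫ s in (0:ℝ)..σ', F s) + (∫ s in σ'..(t/2), F s) + ∫ s in (t/2)..t, F s := hsplit
    _ ≤ (2 ^ γ * t ^ (-γ) * τ) * (1 / (1 - α)) + (2 ^ γ * t ^ (-γ) * τ) * (2 * L / (1 - α))
        + (2 ^ γ * t ^ (-γ) * τ) * (1 / (1 - γ)) := by linarith [hB1, hB2', hB3]
    _ = (2 ^ γ * t ^ (-γ) * τ) * (1 / (1 - α) + 2 * L / (1 - α) + 1 / (1 - γ)) := by ring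
    _ ≤ (2 ^ γ * t ^ (-γ) * τ) * (4 * L / ((1 - γ) * (1 - α))) :=
        mul_le_mul_of_nonneg_left hkey hP.le
    _ = (2 : ℝ) ^ (γ + 2) / ((1 - γ) * (1 - α)) * t ^ (-γ) * L * τ := hRHS.symm
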